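/- (Polynomial-coefficient reformulation, Formula (4).) Let X = (a_1, ..., a_m) be a finite list of nonzero vectors spanning ℂ^n and μ : {1,...,m} → ℂ. Define X_p := { i : ⟨a_i | p⟩ + μ_i = 0 } and P(X,μ) := { p ∈ ℂ^n : {a_i : i ∈ X_p} spans ℂ^n }. Then there exist polynomials C_p ∈ ℂ[x_1,...,x_n], one for each p ∈ P(X,μ), such that in the fraction field K = ℂ(x_1,...,x_n) one has ∏_{i=1}^m 1/(a_i + μ_i) = Σ_{p ∈ P(X,μ)} C_p · ∏_{i ∈ X_p} 1/(a_i + μ_i). -/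

import Mathlib

open MvPolynomial

/-- The linear polynomial `∑ j, a j * x j ∈ ℂ[x_1, …, x_n]` attached to a vector `a ∈ ℂ^n`. -/
noncomputable def linForm {n : ℕ} (a : Fin n → ℂ) : MvPolynomial (Fin n) ℂ :=
  ∑ j, C (a j) * X j

/-- The element `a i + μ i` of the rational function field `K = ℂ(x_1, …, x_n)`. -/
noncomputable def affForm {n m : ℕ} (a : Fin m → (Fin n → ℂ)) (μ : Fin m → ℂ) (i : Fin m) :
    FractionRing (MvPolynomial (Fin n) ℂ) :=
  algebraMap (MvPolynomial (Fin n) ℂ) (FractionRing (MvPolynomial (Fin n) ℂ))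
    (linForm (a i) + C (μ i))

/-- `X_p`: the set of indices `i` such that `⟨a i | p⟩ + μ i = 0`. -/
def Xp {n m : ℕ} (a : Fin m → (Fin n → ℂ)) (μ : Fin m → ℂ) (p : Fin n → ℂ) : Set (Fin m) :=
  {i | (∑ j, a i j * p j) + μ i = 0}

/-- `X_p` as a finite set of indices. -/
noncomputable def XpFinset {n m : ℕ} (a : Fin m → (Fin n → ℂ)) (μ : Fin m → ℂ)
    (p : Fin n → ℂ) : Finset (Fin m) :=
  (Set.toFinite (Xp a μ p)).toFinset

/-- `P(X, μ)`: the points of the arrangement, i.e. the points `p` such that the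
vectors `{a i : i ∈ X_p}` span `ℂ^n`. -/
def armPoints {n m : ℕ} (a : Fin m → (Fin n → ℂ)) (μ : Fin m → ℂ) : Set (Fin n → ℂ) :=
  {p | Submodule.span ℂ (a '' Xp a μ p) = ⊤}

lemma eval_linForm {n : ℕ} (b : Fin n → ℂ) (p : Fin n → ℂ) :
    eval p (linForm b) = ∑ j, b j * p j := by
  simp [linForm]

lemma linForm_add_C_ne_zero {n : ℕ} {b : Fin n → ℂ} (hb : b ≠ 0) (μ0 : ℂ) :
    linForm b + C μ0 ≠ 0 := by
  obtain ⟨j, hj⟩ : ∃ j, b j ≠ 0 := by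
    by_contra h; push_neg at h; exact hb (funext h)
  intro h
  have h2 := congrArg (eval (fun k => if k = j then (1 - μ0) / b j else 0)) h
  simp only [map_add, eval_linForm, eval_C, map_zero, mul_ite, mul_zero,
    Finset.sum_ite_eq', Finset.mem_univ, if_true] at h2
  rw [mul_div_cancel₀ _ hj] at h2
  simp at h2

lemma linForm_zero {n : ℕ} : linForm (0 : Fin n → ℂ) = 0 := by simp [linForm]

lemma linForm_add {n : ℕ} (u v : Fin n → ℂ) : linForm (u + v) = linForm u + linForm v := by
  simp [linForm, add_mul, Finset.sum_add_distrib]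

lemma linForm_smul {n : ℕ} (c : ℂ) (u : Fin n → ℂ) : linForm (c • u) = C c * linForm u := by
  simp [linForm, Finset.mul_sum, mul_assoc]

lemma sum_C_mul_aff {n m : ℕ} (a : Fin m → (Fin n → ℂ)) (μ : Fin m → ℂ)
    (S : Finset (Fin m)) (c : Fin m → ℂ) :
    ∑ i ∈ S, C (c i) * (linForm (a i) + C (μ i))
      = linForm (∑ i ∈ S, c i • a i) + C (∑ i ∈ S, c i * μ i) := by
  classical
  induction S using Finset.induction_on with
  | empty => simp [linForm_zero]
  | insert _ _ hx ih =>
      rw [Finset.sum_insert hx, Finset.sum_insert hx, Finset.sum_insert hx, ih,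
        linForm_add, linForm_smul, map_add, map_mul]
      ring

lemma dichotomy {n m : ℕ} (a : Fin m → (Fin n → ℂ)) (μ : Fin m → ℂ)
    (S : Finset (Fin m)) :
    (∃ p : Fin n → ℂ, ∀ i ∈ S, (∑ j, a i j * p j) + μ i = 0) ∨
    (∃ c : Fin m → ℂ, (∀ i ∉ S, c i = 0) ∧ (∑ i ∈ S, c i • a i = 0) ∧
      ∑ i ∈ S, c i * μ i = 1) := by
  classical
  by_cases hcons : ∃ p : Fin n → ℂ, ∀ i ∈ S, (∑ j, a i j * p j) + μ i = 0
  · exact Or.inl hcons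
  right
  -- the linear map p ↦ (∑ j, a i j * p j)_{i ∈ S}
  set A : (Fin n → ℂ) →ₗ[ℂ] ({i // i ∈ S} → ℂ) :=
    LinearMap.pi (fun i => ∑ j, a i.1 j • LinearMap.proj j) with hA
  have hAapp : ∀ p (i : {i // i ∈ S}), A p i = ∑ j, a i.1 j * p j := by
    intro p i
    simp [hA, LinearMap.pi_apply, LinearMap.sum_apply]
  set y : {i // i ∈ S} → ℂ := fun i => -μ i.1 with hy
  have hymem : y ∉ LinearMap.range A := by
    rintro ⟨p, hp⟩
    exact hcons ⟨p, fun i hi => by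
      have := congrFun hp ⟨i, hi⟩
      rw [hAapp] at this
      rw [this]; simp [hy]⟩
  obtain ⟨f, hf0, hfbot⟩ :=
    (LinearMap.range A).exists_dual_map_eq_bot_of_notMem hymem inferInstance
  set d : {i // i ∈ S} → ℂ := fun i => f (Pi.single i 1) with hd
  have hrepr : ∀ v, f v = ∑ i, v i * d i := by
    intro v
    rw [LinearMap.pi_apply_eq_sum_univ f v]
    refine Finset.sum_congr rfl fun i _ => ?_
    rw [smul_eq_mul, hd]
    have hs : (fun j => if i = j then (1 : ℂ) else 0) = Pi.single i 1 := by
      funext j; simp [Pi.single_apply, eq_comm]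
    rw [hs]
  have hker : ∀ p : Fin n → ℂ, ∑ i : {i // i ∈ S}, (∑ j, a i.1 j * p j) * d i = 0 := by
    intro p
    have h1 : f (A p) = 0 := by
      have : f (A p) ∈ Submodule.map f (LinearMap.range A) :=
        Submodule.mem_map_of_mem ⟨p, rfl⟩
      rw [hfbot] at this
      simpa using this
    rw [hrepr] at h1
    simpa [hAapp] using h1
  have hlin : ∀ j0, ∑ i : {i // i ∈ S}, a i.1 j0 * d i = 0 := by
    intro j0
    have := hker (Pi.single j0 1)
    simpa [Pi.single_apply, mul_ite, Finset.sum_ite_eq'] using this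
  set lam : ℂ := f y with hlam
  have hlamval : lam = ∑ i : {i // i ∈ S}, (-μ i.1) * d i := by
    rw [hlam, hrepr]
  have hmu : ∑ i : {i // i ∈ S}, μ i.1 * d i = -lam := by
    rw [hlamval, ← Finset.sum_neg_distrib]
    exact Finset.sum_congr rfl fun i _ => by ring
  refine ⟨fun i => if h : i ∈ S then -(d ⟨i, h⟩) / lam else 0, fun i hi => dif_neg hi, ?_, ?_⟩
  · funext j0
    simp only [Finset.sum_apply, Pi.smul_apply, smul_eq_mul]
    rw [← Finset.sum_attach S (fun i => (if h : i ∈ S then -(d ⟨i, h⟩) / lam else 0) * a i j0)]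
    have : ∀ i : {x // x ∈ S},
        (if h : (i : Fin m) ∈ S then -(d ⟨i, h⟩) / lam else 0) * a i.1 j0
          = -(a i.1 j0 * d i) / lam := by
      intro i; rw [dif_pos i.2]; ring_nf
    rw [Finset.sum_congr rfl fun i _ => this i, ← Finset.sum_div]
    have h4 : ∑ i ∈ S.attach, -(a i.1 j0 * d i) = 0 := by
      rw [Finset.attach_eq_univ]
      simp only [Finset.sum_neg_distrib, hlin j0, neg_zero]
    rw [h4]
    simp
  · rw [← Finset.sum_attach S (fun i => (if h : i ∈ S then -(d ⟨i, h⟩) / lam else 0) * μ i)]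
    have : ∀ i : {x // x ∈ S},
        (if h : (i : Fin m) ∈ S then -(d ⟨i, h⟩) / lam else 0) * μ i.1
          = -(μ i.1 * d i) / lam := by
      intro i; rw [dif_pos i.2]; ring_nf
    rw [Finset.sum_congr rfl fun i _ => this i, ← Finset.sum_div]
    have h4 : ∑ i ∈ S.attach, -(μ i.1 * d i) = lam := by
      rw [Finset.attach_eq_univ]
      simp only [Finset.sum_neg_distrib, hmu, neg_neg]
    rw [h4, div_self hf0]

lemma affForm_ne_zero {n m : ℕ} (a : Fin m → (Fin n → ℂ)) (μ : Fin m → ℂ)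
    (ha : ∀ i, a i ≠ 0) (i : Fin m) : affForm a μ i ≠ 0 := by
  rw [affForm, Ne, IsFractionRing.to_map_eq_zero_iff]
  exact linForm_add_C_ne_zero (ha i) (μ i)

lemma smul_eq_algMul {n : ℕ} (r : MvPolynomial (Fin n) ℂ)
    (x : FractionRing (MvPolynomial (Fin n) ℂ)) :
    r • x = algebraMap (MvPolynomial (Fin n) ℂ) (FractionRing (MvPolynomial (Fin n) ℂ)) r * x := by
  rw [← IsScalarTower.algebraMap_smul (FractionRing (MvPolynomial (Fin n) ℂ)) r x, smul_eq_mul]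

lemma key {n m : ℕ} (a : Fin m → (Fin n → ℂ)) (μ : Fin m → ℂ) (ha : ∀ i, a i ≠ 0) :
    ∀ S : Finset (Fin m), Submodule.span ℂ (a '' ↑S) = ⊤ →
      ∏ i ∈ S, (affForm a μ i)⁻¹ ∈
        Submodule.span (MvPolynomial (Fin n) ℂ)
          {x : FractionRing (MvPolynomial (Fin n) ℂ) |
            ∃ p ∈ armPoints a μ, x = ∏ i ∈ XpFinset a μ p, (affForm a μ i)⁻¹} := by
  classical
  set alg := algebraMap (MvPolynomial (Fin n) ℂ) (FractionRing (MvPolynomial (Fin n) ℂ))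
    with halg
  set g := affForm a μ with hg
  have hgne : ∀ i, g i ≠ 0 := affForm_ne_zero a μ ha
  intro S
  induction S using Finset.strongInduction with
  | _ S IH =>
    intro hS
    rcases dichotomy a μ S with ⟨p, hp⟩ | ⟨c, hc0, hclin, hcmu⟩
    · -- consistent case
      have hSXp : ∀ i ∈ S, i ∈ XpFinset a μ p := by
        intro i hi
        rw [XpFinset, Set.Finite.mem_toFinset]
        exact hp i hi
      have hpP : p ∈ armPoints a μ := by
        rw [armPoints, Set.mem_setOf_eq, eq_top_iff, ← hS]
        apply Submodule.span_mono
        exact Set.image_mono (fun i hi => hp i hi)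
      have hsub : S ⊆ XpFinset a μ p := hSXp
      have hprod : ∏ i ∈ S, (g i)⁻¹
          = alg (∏ i ∈ XpFinset a μ p \ S, (linForm (a i) + C (μ i))) *
              ∏ i ∈ XpFinset a μ p, (g i)⁻¹ := by
        rw [map_prod]
        have : ∀ i ∈ XpFinset a μ p \ S, alg (linForm (a i) + C (μ i)) = g i := fun i _ => rfl
        rw [Finset.prod_congr rfl this]
        rw [← Finset.prod_sdiff hsub, Finset.prod_inv_distrib, Finset.prod_inv_distrib,
          ← mul_assoc]
        rw [mul_inv_cancel₀ (Finset.prod_ne_zero_iff.mpr fun i _ => hgne i), one_mul,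
          ← Finset.prod_inv_distrib]
      rw [hprod]
      have hmem := Submodule.smul_mem
        (Submodule.span (MvPolynomial (Fin n) ℂ)
          {x : FractionRing (MvPolynomial (Fin n) ℂ) |
            ∃ p ∈ armPoints a μ, x = ∏ i ∈ XpFinset a μ p, (g i)⁻¹})
        (∏ i ∈ XpFinset a μ p \ S, (linForm (a i) + C (μ i)))
        (Submodule.subset_span ⟨p, hpP, rfl⟩)
      rwa [smul_eq_algMul] at hmem
    · -- reduction case
      have key1 : ∑ i ∈ S, alg (C (c i)) * g i = 1 := by
        rw [hg]
        simp only [affForm, ← map_mul, halg]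
        rw [← map_sum, sum_C_mul_aff a μ S c, hclin, hcmu, linForm_zero, zero_add, map_one,
          map_one]
      have hstep : ∏ i ∈ S, (g i)⁻¹
          = ∑ i ∈ S, alg (C (c i)) * ∏ j ∈ S.erase i, (g j)⁻¹ := by
        have h1 : ∀ i ∈ S, alg (C (c i)) * ∏ j ∈ S.erase i, (g j)⁻¹
            = alg (C (c i)) * g i * ∏ j ∈ S, (g j)⁻¹ := by
          intro i hi
          rw [mul_assoc]
          congr 1
          rw [← Finset.mul_prod_erase S (fun j => (g j)⁻¹) hi, ← mul_assoc,
            mul_inv_cancel₀ (hgne i), one_mul]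
        rw [Finset.sum_congr rfl h1, ← Finset.sum_mul, key1, one_mul]
      rw [hstep]
      apply Submodule.sum_mem
      intro i hi
      by_cases hci : c i = 0
      · simp [hci]
      · have herase : Submodule.span ℂ (a '' ↑(S.erase i)) = ⊤ := by
          rw [eq_top_iff, ← hS]
          apply Submodule.span_le.mpr
          rintro x ⟨j, hj, rfl⟩
          rw [Finset.mem_coe] at hj
          by_cases hji : j = i
          · subst hji
            have hsum : c j • a j = -∑ k ∈ S.erase j, c k • a k := by
              rw [eq_neg_iff_add_eq_zero, Finset.add_sum_erase S (fun k => c k • a k) hj]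
              exact hclin
            have : a j = (-(c j)⁻¹) • ∑ k ∈ S.erase j, c k • a k := by
              rw [neg_smul, ← smul_neg, ← hsum, smul_smul, inv_mul_cancel₀ hci, one_smul]
            rw [this]
            apply Submodule.smul_mem
            apply Submodule.sum_mem
            intro k hk
            exact Submodule.smul_mem _ _ (Submodule.subset_span
              (Set.mem_image_of_mem a (Finset.mem_coe.mpr hk)))
          · exact Submodule.subset_span (Set.mem_image_of_mem a (by
              rw [Finset.coe_erase]; exact ⟨hj, hji⟩))
        have hmem := IH (S.erase i) (Finset.erase_ssubset hi) herase
        rw [← smul_eq_algMul]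
        exact Submodule.smul_mem _ _ hmem

/-- Polynomial-coefficient reformulation (Formula (4)): there exist polynomials
`C_p ∈ ℂ[x_1, …, x_n]`, one for each point `p ∈ P(X, μ)` of the arrangement, such that
in `K = ℂ(x_1, …, x_n)` one has
`∏ i, 1/(a i + μ i) = ∑_{p ∈ P(X,μ)} C_p ∏_{i ∈ X_p} 1/(a i + μ i)`. -/
theorem polynomial_coefficient_formula {n m : ℕ} (a : Fin m → (Fin n → ℂ)) (μ : Fin m → ℂ)
    (ha : ∀ i, a i ≠ 0)
    (hspan : Submodule.span ℂ (Set.range a) = ⊤) :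
    ∃ Cp : (Fin n → ℂ) → MvPolynomial (Fin n) ℂ,
      ∏ i, (affForm a μ i)⁻¹ =
        ∑ᶠ p ∈ armPoints a μ,
          algebraMap (MvPolynomial (Fin n) ℂ) (FractionRing (MvPolynomial (Fin n) ℂ))
              (Cp p) *
            ∏ i ∈ XpFinset a μ p, (affForm a μ i)⁻¹ := by
  classical
  have huniv : Submodule.span ℂ (a '' ↑(Finset.univ : Finset (Fin m))) = ⊤ := by
    rwa [Finset.coe_univ, Set.image_univ]
  have hmem := key a μ ha Finset.univ huniv
  rw [Submodule.mem_span_set'] at hmem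
  obtain ⟨N, f, g, hfg⟩ := hmem
  -- choose points
  have hq : ∀ i : Fin N, ∃ p ∈ armPoints a μ,
      (g i : FractionRing (MvPolynomial (Fin n) ℂ)) = ∏ j ∈ XpFinset a μ p, (affForm a μ j)⁻¹ :=
    fun i => (g i).2
  choose q hqP hqval using hq
  set F : Finset (Fin n → ℂ) := Finset.image q Finset.univ with hF
  refine ⟨fun p => ∑ i ∈ Finset.univ.filter (fun i => q i = p), f i, ?_⟩
  set Cp : (Fin n → ℂ) → MvPolynomial (Fin n) ℂ :=
    fun p => ∑ i ∈ Finset.univ.filter (fun i => q i = p), f i with hCp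
  set h : (Fin n → ℂ) → FractionRing (MvPolynomial (Fin n) ℂ) :=
    fun p => algebraMap (MvPolynomial (Fin n) ℂ) (FractionRing (MvPolynomial (Fin n) ℂ)) (Cp p) *
      ∏ i ∈ XpFinset a μ p, (affForm a μ i)⁻¹ with hh
  have hsupp : Function.support h ⊆ ↑F := by
    intro p hp
    by_contra hpF
    apply hp
    have : Finset.univ.filter (fun i => q i = p) = ∅ := by
      rw [Finset.filter_eq_empty_iff]
      intro i _
      intro hqi
      exact hpF (by rw [← hqi]; exact Finset.mem_coe.mpr (Finset.mem_image_of_mem q (Finset.mem_univ i)))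
    rw [hh, hCp]
    simp [this]
  have hFsub : ↑F ⊆ armPoints a μ := by
    intro p hp
    rw [hF] at hp
    simp only [Finset.coe_image, Finset.coe_univ, Set.image_univ, Set.mem_range] at hp
    obtain ⟨i, rfl⟩ := hp
    exact hqP i
  have h1 : ∑ᶠ p ∈ armPoints a μ, h p = ∑ p ∈ F, h p := by
    apply finsum_mem_eq_sum_of_inter_support_eq
    rw [Set.inter_eq_self_of_subset_right (hsupp.trans hFsub),
      Set.inter_eq_self_of_subset_right hsupp]
  rw [show (∑ᶠ p ∈ armPoints a μ,
      algebraMap (MvPolynomial (Fin n) ℂ) (FractionRing (MvPolynomial (Fin n) ℂ)) (Cp p) *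
        ∏ i ∈ XpFinset a μ p, (affForm a μ i)⁻¹) = ∑ᶠ p ∈ armPoints a μ, h p from rfl, h1]
  have h2 : ∀ p ∈ F, h p = ∑ i ∈ Finset.univ.filter (fun i => q i = p),
      f i • (g i : FractionRing (MvPolynomial (Fin n) ℂ)) := by
    intro p _
    simp only [hh, hCp]
    rw [map_sum, Finset.sum_mul]
    refine Finset.sum_congr rfl fun i hi => ?_
    rw [Finset.mem_filter] at hi
    rw [smul_eq_algMul, hqval i, hi.2]
  rw [Finset.sum_congr rfl h2,
    Finset.sum_fiberwise_of_maps_to (fun i _ => Finset.mem_image_of_mem q (Finset.mem_univ i)),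
    hfg]
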